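/- Let k be a division ring and P a left affine 2-plane in k^n containing two distinct right affine lines through a common point. Then P is two-sided (i.e., P is also a right affine subspace). -/

import Mathlib

open Function Set

variable {k : Type*}

/-- A set is a left `k`-subspace of `k^n`. -/
def IsLeftSub [DivisionRing k] {n : ℕ} (A : Set (Fin n → k)) : Prop :=
  ∃ S : Submodule k (Fin n → k), A = (S : Set (Fin n → k))

/-- A set is a right `k`-subspace of `k^n` (right modules encoded via `kᵐᵒᵖ`). -/
def IsRightSub [DivisionRing k] {n : ℕ} (A : Set (Fin n → k)) : Prop :=
  ∃ S : Submodule kᵐᵒᵖ (Fin n → k), A = (S : Set (Fin n → k))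

/-- A set is a left affine subspace of `k^n`: a translate of a left subspace. -/
def IsLeftAff [DivisionRing k] {n : ℕ} (A : Set (Fin n → k)) : Prop :=
  ∃ (v : Fin n → k) (S : Submodule k (Fin n → k)), A = (v + ·) '' (S : Set (Fin n → k))

/-- A set is a right affine subspace of `k^n`: a translate of a right subspace. -/
def IsRightAff [DivisionRing k] {n : ℕ} (A : Set (Fin n → k)) : Prop :=
  ∃ (v : Fin n → k) (S : Submodule kᵐᵒᵖ (Fin n → k)), A = (v + ·) '' (S : Set (Fin n → k))

/-- `A` is a left affine subspace of dimension `d`. -/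
def HasDimL [DivisionRing k] {n : ℕ} (A : Set (Fin n → k)) (d : ℕ) : Prop :=
  ∃ (v : Fin n → k) (S : Submodule k (Fin n → k)),
    A = (v + ·) '' (S : Set (Fin n → k)) ∧ Module.finrank k S = d

/-- `A` is a right affine subspace of dimension `d`. -/
def HasDimR [DivisionRing k] {n : ℕ} (A : Set (Fin n → k)) (d : ℕ) : Prop :=
  ∃ (v : Fin n → k) (S : Submodule kᵐᵒᵖ (Fin n → k)),
    A = (v + ·) '' (S : Set (Fin n → k)) ∧ Module.finrank kᵐᵒᵖ S = d

open Function Set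

section Helpers

variable {k : Type*} [DivisionRing k] {n : ℕ}

/-- Recentring a coset of a submodule at any of its points. -/
lemma coset_recenter {R V : Type*} [Ring R] [AddCommGroup V] [Module R V]
    (S : Submodule R V) (v x : V) (hx : x ∈ (v + ·) '' (S : Set V)) :
    (v + ·) '' (S : Set V) = (x + ·) '' (S : Set V) := by
  obtain ⟨s₀, hs₀, rfl⟩ := hx
  ext y
  constructor
  · rintro ⟨s, hs, rfl⟩
    exact ⟨s - s₀, sub_mem hs hs₀, by dsimp only; abel⟩
  · rintro ⟨s, hs, rfl⟩
    exact ⟨s₀ + s, add_mem hs₀ hs, by dsimp only; abel⟩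

lemma op_smul_apply (c : k) (u : Fin n → k) (j : Fin n) :
    (MulOpposite.op c • u) j = u j * c := rfl

lemma smul_apply' (a : k) (u : Fin n → k) (j : Fin n) :
    (a • u) j = a * u j := rfl

/-- If every right multiple of `u` is a left multiple of `u`, then every left multiple
of `u` is a right multiple of `u` (via conjugation by a nonzero coordinate). -/
lemma left_smul_mem_right_span {u : Fin n → k} (hu : u ≠ 0)
    (hconj : ∀ c : k, ∃ a : k, a • u = MulOpposite.op c • u) (μ : k) :
    μ • u ∈ Submodule.span kᵐᵒᵖ ({u} : Set (Fin n → k)) := by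
  obtain ⟨i, hi⟩ : ∃ i, u i ≠ 0 := by
    by_contra h
    push_neg at h
    exact hu (funext fun j => h j)
  have key : ∀ c : k, MulOpposite.op c • u = (u i * c * (u i)⁻¹) • u := by
    intro c
    obtain ⟨a, ha⟩ := hconj c
    have hai : a * u i = u i * c := congrFun ha i
    have : a = u i * c * (u i)⁻¹ := by
      rw [← hai, mul_assoc, mul_inv_cancel₀ hi, mul_one]
    rw [← ha, this]
  rw [Submodule.mem_span_singleton]
  refine ⟨MulOpposite.op ((u i)⁻¹ * (μ * u i)), ?_⟩
  rw [key]
  congr 1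
  rw [← mul_assoc, mul_inv_cancel₀ hi, one_mul, mul_assoc, mul_inv_cancel₀ hi, mul_one]

end Helpers
theorem stmt_16 [DivisionRing k] {n : ℕ} (P : Set (Fin n → k)) (hP : HasDimL P 2)
    (L L' : Set (Fin n → k)) (hL : HasDimR L 1) (hL' : HasDimR L' 1) (hne : L ≠ L')
    (x : Fin n → k) (hxL : x ∈ L) (hxL' : x ∈ L') (hLP : L ⊆ P) (hL'P : L' ⊆ P) :
    IsRightAff P := by
  classical
  obtain ⟨v, S, hPS, hS2⟩ := hP
  obtain ⟨w, Sr0, hLe, hSr1⟩ := hL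
  obtain ⟨w', Sr0', hLe', hSr'1⟩ := hL'
  -- recenter everything at x
  have hPx : P = (x + ·) '' (S : Set (Fin n → k)) := by
    rw [hPS]; exact coset_recenter S v x (hPS ▸ hLP hxL)
  have hLx : L = (x + ·) '' (Sr0 : Set (Fin n → k)) := by
    rw [hLe]; exact coset_recenter Sr0 w x (hLe ▸ hxL)
  have hL'x : L' = (x + ·) '' (Sr0' : Set (Fin n → k)) := by
    rw [hLe']; exact coset_recenter Sr0' w' x (hLe' ▸ hxL')
  have hinj : Injective (x + ·) := fun a b h => by simpa using h
  have hSrS : (Sr0 : Set (Fin n → k)) ⊆ (S : Set (Fin n → k)) := by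
    have := hLP; rw [hLx, hPx] at this
    exact (Set.image_subset_image_iff hinj).mp this
  have hSr'S : (Sr0' : Set (Fin n → k)) ⊆ (S : Set (Fin n → k)) := by
    have := hL'P; rw [hL'x, hPx] at this
    exact (Set.image_subset_image_iff hinj).mp this
  -- generators of the right lines
  obtain ⟨u, hu0, hSru⟩ : ∃ u : Fin n → k, u ≠ 0 ∧
      Sr0 = Submodule.span kᵐᵒᵖ ({u} : Set (Fin n → k)) := by
    obtain ⟨⟨u, huS⟩, hu0, hspan⟩ := finrank_eq_one_iff'.mp hSr1
    refine ⟨u, by simpa [Subtype.ext_iff] using hu0, le_antisymm ?_ ?_⟩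
    · intro z hz
      obtain ⟨c, hc⟩ := hspan ⟨z, hz⟩
      have : c • u = z := congrArg Subtype.val hc
      rw [← this]
      exact Submodule.smul_mem _ _ (Submodule.mem_span_singleton_self u)
    · rw [Submodule.span_le, Set.singleton_subset_iff]; exact huS
  obtain ⟨u', hu'0, hSru'⟩ : ∃ u' : Fin n → k, u' ≠ 0 ∧
      Sr0' = Submodule.span kᵐᵒᵖ ({u'} : Set (Fin n → k)) := by
    obtain ⟨⟨u', huS⟩, hu0, hspan⟩ := finrank_eq_one_iff'.mp hSr'1
    refine ⟨u', by simpa [Subtype.ext_iff] using hu0, le_antisymm ?_ ?_⟩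
    · intro z hz
      obtain ⟨c, hc⟩ := hspan ⟨z, hz⟩
      have : c • u' = z := congrArg Subtype.val hc
      rw [← this]
      exact Submodule.smul_mem _ _ (Submodule.mem_span_singleton_self u')
    · rw [Submodule.span_le, Set.singleton_subset_iff]; exact huS
  have huSr : u ∈ Sr0 := hSru ▸ Submodule.mem_span_singleton_self u
  have hu'Sr' : u' ∈ Sr0' := hSru' ▸ Submodule.mem_span_singleton_self u'
  -- the left span of the union of the two right lines
  set T : Submodule k (Fin n → k) :=
    Submodule.span k ((Sr0 : Set (Fin n → k)) ∪ (Sr0' : Set (Fin n → k))) with hT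
  have hTS : T ≤ S := by
    rw [hT, Submodule.span_le]
    exact Set.union_subset hSrS hSr'S
  have huT : u ∈ T := Submodule.subset_span (Or.inl huSr)
  have hu'T : u' ∈ T := Submodule.subset_span (Or.inr hu'Sr')
  -- T is closed under right multiplication
  have hTright : ∀ (c : kᵐᵒᵖ) (z : Fin n → k), z ∈ T → c • z ∈ T := by
    intro c z hz
    induction hz using Submodule.span_induction with
    | mem g hg =>
      rcases hg with hg | hg
      · exact Submodule.subset_span (Or.inl (Submodule.smul_mem _ c hg))
      · exact Submodule.subset_span (Or.inr (Submodule.smul_mem _ c hg))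
    | zero => rw [smul_zero]; exact T.zero_mem
    | add y z _ _ hy hz => rw [smul_add]; exact T.add_mem hy hz
    | smul a y _ hy => rw [smul_comm]; exact T.smul_mem a hy
  -- find a linearly independent pair in T
  have hpair : ∃ p : Fin 2 → (Fin n → k),
      LinearIndependent k p ∧ p 0 ∈ T ∧ p 1 ∈ T := by
    by_cases hdep : ∃ a : k, a • u = u'
    · obtain ⟨lam, hlam⟩ := hdep
      have hlam0 : lam ≠ 0 := by rintro rfl; simp at hlam; exact hu'0 hlam.symm
      by_cases hconj : ∀ c : k, ∃ a : k, a • u = MulOpposite.op c • u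
      · -- then the two right lines coincide, contradiction
        exfalso
        apply hne
        have h1 : u' ∈ Sr0 := by
          rw [hSru, ← hlam]
          exact left_smul_mem_right_span hu0 hconj lam
        have hconj' : ∀ c : k, ∃ a : k, a • u' = MulOpposite.op c • u' := by
          intro c
          obtain ⟨a, ha⟩ := hconj c
          refine ⟨lam * a * lam⁻¹, ?_⟩
          rw [← hlam, smul_comm (MulOpposite.op c) lam u, ← ha]
          rw [smul_smul, smul_smul, mul_assoc, mul_assoc, inv_mul_cancel₀ hlam0, mul_one]
        have h2 : u ∈ Sr0' := by
          have : u = lam⁻¹ • u' := by rw [← hlam, smul_smul, inv_mul_cancel₀ hlam0, one_smul]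
          rw [this, hSru']
          exact left_smul_mem_right_span hu'0 hconj' lam⁻¹
        have hSS : Sr0 = Sr0' := by
          apply le_antisymm
          · rw [hSru, Submodule.span_le, Set.singleton_subset_iff]; exact h2
          · rw [hSru', Submodule.span_le, Set.singleton_subset_iff]; exact h1
        rw [hLx, hL'x, hSS]
      · push_neg at hconj
        obtain ⟨c, hc⟩ := hconj
        refine ⟨![MulOpposite.op c • u, u], ?_, ?_, ?_⟩
        · rw [linearIndependent_fin2]
          exact ⟨by simpa using hu0, by simpa using hc⟩
        · simpa using hTright (MulOpposite.op c) u huT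
        · simpa using huT
    · push_neg at hdep
      refine ⟨![u', u], ?_, by simpa using hu'T, by simpa using huT⟩
      rw [linearIndependent_fin2]
      exact ⟨by simpa using hu0, by simpa using hdep⟩
  -- hence T has rank at least 2, so T = S
  obtain ⟨p, hpind, hp0, hp1⟩ := hpair
  have hrank : 2 ≤ Module.finrank k T := by
    have hle : Submodule.span k (Set.range p) ≤ T := by
      rw [Submodule.span_le]
      rintro z ⟨i, rfl⟩
      fin_cases i
      · exact hp0
      · exact hp1
    calc (2 : ℕ) = Module.finrank k (Submodule.span k (Set.range p)) := by
          rw [finrank_span_eq_card hpind]; simp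
      _ ≤ Module.finrank k T := Submodule.finrank_mono hle
  have hTSeq : T = S := Submodule.eq_of_le_of_finrank_le hTS (hS2 ▸ hrank)
  -- S is therefore also a right submodule
  refine ⟨x, { carrier := (S : Set (Fin n → k)),
               add_mem' := fun ha hb => S.add_mem ha hb,
               zero_mem' := S.zero_mem,
               smul_mem' := fun c z hz => by
                 rw [← hTSeq] at hz ⊢
                 exact hTright c z hz }, hPx⟩
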